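/- Set k = 5, h = 3. For z = (x,y) ∈ ℝ^5 × ℝ^3 write u = 2|x|^2, v = 4|y|^2, and let f(x,y) = (u − v)u^{3/4}/4 and g = ∇f/|∇f|. Then at every point with x ≠ 0, div g = [ (1/32) u^{1/4} (u − v) ( 49u^2 − 72uv + 27v^2 ) ] / [ (1/32) √u ( 49u^2 − 10uv + 9v^2 ) ]^{3/2}; in particular |∇f|^2 = (1/32) √u ( 49u^2 − 10uv + 9v^2 ) there. -/

import Mathlib

open MeasureTheory
open scoped RealInnerProductSpace ENNReal

noncomputable section

/-- Euclidean norm of the first (`ℝ^k`) component of `z = (x, y)`. -/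
def nX (k h : ℕ) (z : EuclideanSpace ℝ (Fin (k + h))) : ℝ :=
  Real.sqrt (∑ i : Fin k, (z (Fin.castAdd h i)) ^ 2)

/-- Euclidean norm of the second (`ℝ^h`) component of `z = (x, y)`. -/
def nY (k h : ℕ) (z : EuclideanSpace ℝ (Fin (k + h))) : ℝ :=
  Real.sqrt (∑ j : Fin h, (z (Fin.natAdd k j)) ^ 2)

/-- The Lawson cone `M_{kh}`. -/
def Mset (k h : ℕ) : Set (EuclideanSpace ℝ (Fin (k + h))) :=
  {z | nX k h z / Real.sqrt ((k : ℝ) - 1) = nY k h z / Real.sqrt ((h : ℝ) - 1)}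

/-- The open region `K_{kh}` bounded by the Lawson cone. -/
def Kset (k h : ℕ) : Set (EuclideanSpace ℝ (Fin (k + h))) :=
  {z | nX k h z / Real.sqrt ((k : ℝ) - 1) < nY k h z / Real.sqrt ((h : ℝ) - 1)}

/-- The cylinder `H_R = B_R^k × B_R^h`. -/
def Hset (k h : ℕ) (R : ℝ) : Set (EuclideanSpace ℝ (Fin (k + h))) :=
  {z | nX k h z < R ∧ nY k h z < R}

/-- The exceptional set `S` of pairs. -/
def S : Set (ℕ × ℕ) := {(3, 5), (2, 7), (2, 8), (2, 9), (2, 10), (2, 11)}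

/-- Divergence of a vector field, as the trace of its derivative
(equivalently `∑ i, ∂ᵢ gᵢ`). -/
def divg {n : ℕ} (g : EuclideanSpace ℝ (Fin n) → EuclideanSpace ℝ (Fin n))
    (z : EuclideanSpace ℝ (Fin n)) : ℝ :=
  LinearMap.trace ℝ _ (fderiv ℝ g z).toLinearMap

/-- `u = (h-1)|x|^2 = 2|x|^2` (here `(h,k) = (3,5)`). -/
def uu (z : EuclideanSpace ℝ (Fin (5 + 3))) : ℝ := 2 * nX 5 3 z ^ 2

/-- `v = (k-1)|y|^2 = 4|y|^2`. -/
def vv (z : EuclideanSpace ℝ (Fin (5 + 3))) : ℝ := 4 * nY 5 3 z ^ 2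

/-- `f₊(x,y) = (u - v)·u^{3/4}/4`. -/
def fp (z : EuclideanSpace ℝ (Fin (5 + 3))) : ℝ :=
  (uu z - vv z) * uu z ^ ((3 : ℝ) / 4) / 4

/-- `f₋(x,y) = (u - v)·v^{3/4}/4`. -/
def fm (z : EuclideanSpace ℝ (Fin (5 + 3))) : ℝ :=
  (uu z - vv z) * vv z ^ ((3 : ℝ) / 4) / 4

namespace HS
abbrev E8 := EuclideanSpace ℝ (Fin (5+3))

def sf (w : E8) : ℝ := ∑ i : Fin 5, w (Fin.castAdd 3 i)^2
def tf (w : E8) : ℝ := ∑ j : Fin 3, w (Fin.natAdd 5 j)^2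

lemma sf_nonneg (w : E8) : 0 ≤ sf w := Finset.sum_nonneg fun _ _ => sq_nonneg _
lemma tf_nonneg (w : E8) : 0 ≤ tf w := Finset.sum_nonneg fun _ _ => sq_nonneg _

lemma uu_eq (w : E8) : uu w = 2 * sf w := by
  rw [uu, nX, Real.sq_sqrt (Finset.sum_nonneg fun _ _ => sq_nonneg _)]; rfl
lemma vv_eq (w : E8) : vv w = 4 * tf w := by
  rw [vv, nY, Real.sq_sqrt (Finset.sum_nonneg fun _ _ => sq_nonneg _)]; rfl

lemma fp_def : fp = fun w : E8 => (4:ℝ)⁻¹ * ((2*sf w - 4*tf w) * (2*sf w) ^ ((3:ℝ)/4)) := by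
  funext w; rw [fp, uu_eq, vv_eq]; ring

def Ds (z : E8) : E8 →L[ℝ] ℝ :=
  ∑ i : Fin 5, (2 * z (Fin.castAdd 3 i)) • EuclideanSpace.proj (𝕜 := ℝ) (Fin.castAdd 3 i)
def Dt (z : E8) : E8 →L[ℝ] ℝ :=
  ∑ j : Fin 3, (2 * z (Fin.natAdd 5 j)) • EuclideanSpace.proj (𝕜 := ℝ) (Fin.natAdd 5 j)

lemma Ds_apply (z y : E8) : Ds z y = ∑ i : Fin 5, 2 * z (Fin.castAdd 3 i) * y (Fin.castAdd 3 i) := by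
  simp [Ds, mul_assoc]
lemma Dt_apply (z y : E8) : Dt z y = ∑ j : Fin 3, 2 * z (Fin.natAdd 5 j) * y (Fin.natAdd 5 j) := by
  simp [Dt, mul_assoc]

lemma hasFDerivAt_coord_sq (z : E8) (i : Fin (5+3)) :
    HasFDerivAt (fun w : E8 => w i ^ 2) ((2 * z i) • EuclideanSpace.proj (𝕜 := ℝ) i) z := by
  have h := ((EuclideanSpace.proj (𝕜 := ℝ) i).hasFDerivAt (x := z)).mul
    ((EuclideanSpace.proj (𝕜 := ℝ) i).hasFDerivAt (x := z))
  have e : (fun w : E8 => w i ^ 2) = fun w : E8 =>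
      EuclideanSpace.proj (𝕜 := ℝ) i w * EuclideanSpace.proj (𝕜 := ℝ) i w := by
    funext w; simp [sq]
  rw [e]
  refine h.congr_fderiv ?_
  ext y; simp
  ring

lemma hasFDerivAt_sf (z : E8) : HasFDerivAt sf (Ds z) z :=
  HasFDerivAt.fun_sum fun i _ => hasFDerivAt_coord_sq z (Fin.castAdd 3 i)
lemma hasFDerivAt_tf (z : E8) : HasFDerivAt tf (Dt z) z :=
  HasFDerivAt.fun_sum fun j _ => hasFDerivAt_coord_sq z (Fin.natAdd 5 j)

def Pc (w : E8) : ℝ := (4*(2*sf w) ^ ((3:ℝ)/4) + 3*(2*sf w - 4*tf w)*(2*sf w) ^ ((3:ℝ)/4-1))/8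
def Qc (w : E8) : ℝ := -(2*sf w) ^ ((3:ℝ)/4)
def Vf (w : E8) : E8 := WithLp.toLp 2 fun i => Fin.addCases (fun _ => 2 * Pc w) (fun _ => 2 * Qc w) i * w i

lemma hasGradientAt_fp (w : E8) (hw : 0 < sf w) : HasGradientAt fp (Vf w) w := by
  rw [hasGradientAt_iff_hasFDerivAt]
  have hne : (2*sf w) ≠ 0 := by positivity
  have hU : HasFDerivAt (fun w : E8 => 2 * sf w) ((2:ℝ) • Ds w) w := (hasFDerivAt_sf w).const_mul 2
  have hW : HasFDerivAt (fun w : E8 => 4 * tf w) ((4:ℝ) • Dt w) w := (hasFDerivAt_tf w).const_mul 4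
  have h34 : HasFDerivAt (fun w : E8 => (2*sf w) ^ ((3:ℝ)/4))
      ((((3:ℝ)/4) * (2*sf w) ^ ((3:ℝ)/4-1)) • ((2:ℝ) • Ds w)) w :=
    by have := (Real.hasDerivAt_rpow_const (p := (3:ℝ)/4) (Or.inl hne)).comp_hasFDerivAt w hU; exact this
  have hmain := ((hU.sub hW).mul h34).const_mul (4:ℝ)⁻¹
  rw [fp_def]
  refine hmain.congr_fderiv ?_
  ext y
  rw [InnerProductSpace.toDual_apply_apply, PiLp.inner_apply]
  simp only [RCLike.inner_apply', conj_trivial, ContinuousLinearMap.coe_smul',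
    ContinuousLinearMap.add_apply, ContinuousLinearMap.coe_sub', Pi.smul_apply, Pi.sub_apply,
    smul_eq_mul, Fin.sum_univ_add, Vf, PiLp.toLp_apply, Fin.addCases_left, Fin.addCases_right,
    Ds_apply, Dt_apply, Pc, Qc]
  simp only [mul_assoc, ← Finset.mul_sum]
  ring

end HS

namespace HS2
open HS

-- quarter-power helpers
lemma rpow_q (x : ℝ) (hx : 0 ≤ x) (n : ℕ) : x ^ ((n:ℝ)/4) = (x ^ ((1:ℝ)/4)) ^ n := by
  rw [← Real.rpow_natCast (x ^ ((1:ℝ)/4)) n, ← Real.rpow_mul hx]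
  congr 1; ring

lemma quarter_pos (x : ℝ) (hx : 0 < x) : 0 < x ^ ((1:ℝ)/4) := Real.rpow_pos_of_pos hx _

lemma eq_r4 (x : ℝ) (hx : 0 ≤ x) : x = (x ^ ((1:ℝ)/4)) ^ 4 := by
  rw [← rpow_q x hx 4]; norm_num
lemma eq_r3 (x : ℝ) (hx : 0 ≤ x) : x ^ ((3:ℝ)/4) = (x ^ ((1:ℝ)/4)) ^ 3 := by
  rw [← rpow_q x hx 3]; norm_num
lemma eq_r2 (x : ℝ) (hx : 0 ≤ x) : x ^ ((1:ℝ)/2) = (x ^ ((1:ℝ)/4)) ^ 2 := by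
  rw [← rpow_q x hx 2]; norm_num
lemma eq_rm1 (x : ℝ) (hx : 0 ≤ x) : x ^ ((3:ℝ)/4-1) = ((x ^ ((1:ℝ)/4)) ^ 1)⁻¹ := by
  rw [show (3:ℝ)/4-1 = -(1/4) by norm_num, Real.rpow_neg hx, ← rpow_q x hx 1]; norm_num
lemma eq_rm5 (x : ℝ) (hx : 0 ≤ x) : x ^ ((3:ℝ)/4-1-1) = ((x ^ ((1:ℝ)/4)) ^ 5)⁻¹ := by
  rw [show (3:ℝ)/4-1-1 = -(5/4) by norm_num, Real.rpow_neg hx, ← rpow_q x hx 5]; norm_num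
lemma eq_rm2 (x : ℝ) (hx : 0 ≤ x) : x ^ ((1:ℝ)/2-1) = ((x ^ ((1:ℝ)/4)) ^ 2)⁻¹ := by
  rw [show (1:ℝ)/2-1 = -(2/4) by norm_num, Real.rpow_neg hx, ← rpow_q x hx 2]; norm_num

end HS2

namespace HS

def Qq (w : E8) : ℝ :=
  49*((2*sf w)*(2*sf w)) - 10*((2*sf w)*(4*tf w)) + 9*((4*tf w)*(4*tf w))
def n2 (w : E8) : ℝ := (32:ℝ)⁻¹ * ((2*sf w) ^ ((1:ℝ)/2) * Qq w)

lemma Qq_pos (w : E8) (hw : 0 < sf w) : 0 < Qq w := by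
  have h1 : 0 ≤ tf w := tf_nonneg w
  have : 0 < 2 * sf w := by linarith
  unfold Qq
  nlinarith [sq_nonneg (5*(2*sf w) - (4*tf w)), sq_nonneg (4*tf w)]

lemma n2_pos (w : E8) (hw : 0 < sf w) : 0 < n2 w := by
  have h2 : (0:ℝ) < 2 * sf w := by linarith
  have h3 := Real.rpow_pos_of_pos h2 ((1:ℝ)/2)
  have h4 := Qq_pos w hw
  rw [n2]
  exact mul_pos (by norm_num) (mul_pos h3 h4)

lemma norm_Vf_sq (w : E8) (hw : 0 < sf w) : ‖Vf w‖ ^ 2 = n2 w := by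
  have hsum : ‖Vf w‖ ^ 2 = ∑ i : Fin (5+3), (Vf w i) ^ 2 := by
    rw [EuclideanSpace.norm_eq, Real.sq_sqrt]
    · simp [Real.norm_eq_abs, sq_abs]
    · exact Finset.sum_nonneg fun _ _ => sq_nonneg _
  rw [hsum, Fin.sum_univ_add]
  simp only [Vf, PiLp.toLp_apply, Fin.addCases_left, Fin.addCases_right, mul_pow]
  rw [← Finset.mul_sum, ← Finset.mul_sum]
  have hsf : ∑ i : Fin 5, w (Fin.castAdd 3 i) ^ 2 = sf w := rfl
  have htf : ∑ j : Fin 3, w (Fin.natAdd 5 j) ^ 2 = tf w := rfl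
  rw [hsf, htf]
  -- now a scalar identity
  have hx : (0:ℝ) ≤ 2 * sf w := by linarith
  set ρ := (2 * sf w) ^ ((1:ℝ)/4) with hρdef
  have hρ : 0 < ρ := HS2.quarter_pos _ (by linarith)
  have h4 : 2 * sf w = ρ ^ 4 := HS2.eq_r4 _ hx
  have hsfρ : sf w = ρ ^ 4 / 2 := by linarith
  rw [n2, Qq, Pc, Qc, HS2.eq_r3 _ hx, HS2.eq_rm1 _ hx, HS2.eq_r2 _ hx, ← hρdef, hsfρ]
  field_simp
  ring

end HS

namespace HS

def cxf (w : E8) : ℝ := (n2 w) ^ (-((1:ℝ)/2)) * (2 * Pc w)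
def cyf (w : E8) : ℝ := (n2 w) ^ (-((1:ℝ)/2)) * (2 * Qc w)
def Gfun (w : E8) : E8 := WithLp.toLp 2 fun i => Fin.addCases (fun _ => cxf w) (fun _ => cyf w) i * w i

-- atoms at z
def A2a (z : E8) : ℝ := (2*sf z) ^ ((3:ℝ)/4-1)
def A3a (z : E8) : ℝ := (2*sf z) ^ ((3:ℝ)/4-1-1)
def C1a (z : E8) : ℝ := (2*sf z) ^ ((1:ℝ)/2)
def C2a (z : E8) : ℝ := (2*sf z) ^ ((1:ℝ)/2-1)
def M1a (z : E8) : ℝ := (n2 z) ^ (-((1:ℝ)/2))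
def M2a (z : E8) : ℝ := (n2 z) ^ (-((1:ℝ)/2)-1)
def E1a (z : E8) : ℝ := (C2a z * Qq z + C1a z*(196*(2*sf z) - 20*(4*tf z)))/32
def E2a (z : E8) : ℝ := C1a z*(72*(4*tf z) - 40*(2*sf z))/32
def Kx1 (z : E8) : ℝ := M1a z*(3/8)*(8*A2a z - (2*sf z - 4*tf z)*A3a z) - Pc z*M2a z*E1a z
def Kx2 (z : E8) : ℝ := -3*M1a z*A2a z - Pc z*M2a z*E2a z
def Ky1 (z : E8) : ℝ := -3*M1a z*A2a z - Qc z*M2a z*E1a z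
def Ky2 (z : E8) : ℝ := -(Qc z*M2a z*E2a z)

section deriv
variable (z : E8) (hz : 0 < sf z)
include hz

lemma hasFDerivAt_n2 : HasFDerivAt n2 (E1a z • Ds z + E2a z • Dt z) z := by
  have hne : (2*sf z) ≠ 0 := by positivity
  have hU : HasFDerivAt (fun w : E8 => 2 * sf w) ((2:ℝ) • Ds z) z := (hasFDerivAt_sf z).const_mul 2
  have hW : HasFDerivAt (fun w : E8 => 4 * tf w) ((4:ℝ) • Dt z) z := (hasFDerivAt_tf z).const_mul 4
  have h12 : HasFDerivAt (fun w : E8 => (2*sf w) ^ ((1:ℝ)/2))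
      ((((1:ℝ)/2) * (2*sf z) ^ ((1:ℝ)/2-1)) • ((2:ℝ) • Ds z)) z :=
    by have := (Real.hasDerivAt_rpow_const (p := (1:ℝ)/2) (Or.inl hne)).comp_hasFDerivAt z hU; exact this
  have hQ := (((hU.mul hU).const_mul (49:ℝ)).sub ((hU.mul hW).const_mul (10:ℝ))).add
    ((hW.mul hW).const_mul (9:ℝ))
  have hmain := (h12.mul hQ).const_mul (32:ℝ)⁻¹
  have e : n2 = fun w : E8 => (32:ℝ)⁻¹ * ((2*sf w) ^ ((1:ℝ)/2) *
      (49*((2*sf w)*(2*sf w)) - 10*((2*sf w)*(4*tf w)) + 9*((4*tf w)*(4*tf w)))) := by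
    funext w; rw [n2, Qq]
  rw [e]
  refine hmain.congr_fderiv ?_
  ext y
  simp only [E1a, E2a, C1a, C2a, Qq, ContinuousLinearMap.add_apply, ContinuousLinearMap.coe_smul',
    Pi.smul_apply, smul_eq_mul, ContinuousLinearMap.coe_sub', Pi.sub_apply, Pi.add_apply, Pi.mul_apply]
  ring

lemma hasFDerivAt_cxf :
    HasFDerivAt cxf (Kx1 z • Ds z + Kx2 z • Dt z) z := by
  have hne : (2*sf z) ≠ 0 := by positivity
  have hn2 := n2_pos z hz
  have hU : HasFDerivAt (fun w : E8 => 2 * sf w) ((2:ℝ) • Ds z) z := (hasFDerivAt_sf z).const_mul 2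
  have hW : HasFDerivAt (fun w : E8 => 4 * tf w) ((4:ℝ) • Dt z) z := (hasFDerivAt_tf z).const_mul 4
  have h34 : HasFDerivAt (fun w : E8 => (2*sf w) ^ ((3:ℝ)/4))
      ((((3:ℝ)/4) * (2*sf z) ^ ((3:ℝ)/4-1)) • ((2:ℝ) • Ds z)) z :=
    by have := (Real.hasDerivAt_rpow_const (p := (3:ℝ)/4) (Or.inl hne)).comp_hasFDerivAt z hU; exact this
  have h341 : HasFDerivAt (fun w : E8 => (2*sf w) ^ ((3:ℝ)/4-1))
      ((((3:ℝ)/4-1) * (2*sf z) ^ ((3:ℝ)/4-1-1)) • ((2:ℝ) • Ds z)) z :=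
    by have := (Real.hasDerivAt_rpow_const (p := (3:ℝ)/4-1) (Or.inl hne)).comp_hasFDerivAt z hU; exact this
  have hPc := (((h34.const_mul (4:ℝ)).add (((hU.sub hW).mul h341).mul_const (3:ℝ))).const_mul (8:ℝ)⁻¹)
  have hM : HasFDerivAt (fun w : E8 => (n2 w) ^ (-((1:ℝ)/2)))
      (((-((1:ℝ)/2)) * (n2 z) ^ (-((1:ℝ)/2)-1)) • (E1a z • Ds z + E2a z • Dt z)) z :=
    (Real.hasDerivAt_rpow_const (p := -((1:ℝ)/2)) (Or.inl hn2.ne')).comp_hasFDerivAt z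
      (hasFDerivAt_n2 z hz)
  have hmain := hM.mul (hPc.const_mul (2:ℝ))
  have e : cxf = fun w : E8 => (n2 w) ^ (-((1:ℝ)/2)) *
      (2 * ((8:ℝ)⁻¹ * (4 * (2*sf w) ^ ((3:ℝ)/4) + ((2*sf w - 4*tf w) * (2*sf w) ^ ((3:ℝ)/4-1)) * 3))) := by
    funext w; rw [cxf, Pc]; ring
  rw [e]
  refine hmain.congr_fderiv ?_
  ext y
  simp only [Kx1, Kx2, M1a, M2a, A2a, A3a, E1a, E2a, C1a, C2a, Pc, Qq,
    ContinuousLinearMap.add_apply, ContinuousLinearMap.coe_smul', Pi.smul_apply, smul_eq_mul,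
    ContinuousLinearMap.coe_sub', Pi.sub_apply, Pi.add_apply, Pi.mul_apply]
  ring

lemma hasFDerivAt_cyf :
    HasFDerivAt cyf (Ky1 z • Ds z + Ky2 z • Dt z) z := by
  have hne : (2*sf z) ≠ 0 := by positivity
  have hn2 := n2_pos z hz
  have hU : HasFDerivAt (fun w : E8 => 2 * sf w) ((2:ℝ) • Ds z) z := (hasFDerivAt_sf z).const_mul 2
  have h34 : HasFDerivAt (fun w : E8 => (2*sf w) ^ ((3:ℝ)/4))
      ((((3:ℝ)/4) * (2*sf z) ^ ((3:ℝ)/4-1)) • ((2:ℝ) • Ds z)) z :=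
    by have := (Real.hasDerivAt_rpow_const (p := (3:ℝ)/4) (Or.inl hne)).comp_hasFDerivAt z hU; exact this
  have hQc := h34.const_mul (-1:ℝ)
  have hM : HasFDerivAt (fun w : E8 => (n2 w) ^ (-((1:ℝ)/2)))
      (((-((1:ℝ)/2)) * (n2 z) ^ (-((1:ℝ)/2)-1)) • (E1a z • Ds z + E2a z • Dt z)) z :=
    (Real.hasDerivAt_rpow_const (p := -((1:ℝ)/2)) (Or.inl hn2.ne')).comp_hasFDerivAt z
      (hasFDerivAt_n2 z hz)
  have hmain := hM.mul (hQc.const_mul (2:ℝ))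
  have e : cyf = fun w : E8 => (n2 w) ^ (-((1:ℝ)/2)) * (2 * (-1 * (2*sf w) ^ ((3:ℝ)/4))) := by
    funext w; rw [cyf, Qc]; ring
  rw [e]
  refine hmain.congr_fderiv ?_
  ext y
  simp only [Ky1, Ky2, M1a, M2a, A2a, E1a, E2a, C1a, C2a, Qc, Qq,
    ContinuousLinearMap.add_apply, ContinuousLinearMap.coe_smul', Pi.smul_apply, smul_eq_mul,
    ContinuousLinearMap.coe_sub', Pi.sub_apply, Pi.add_apply, Pi.mul_apply]
  ring

end deriv
end HS

namespace HS

lemma cast_ne_nat (i : Fin 5) (j : Fin 3) : Fin.castAdd 3 i ≠ Fin.natAdd 5 j := by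
  simp [Fin.ext_iff, Fin.castAdd, Fin.natAdd]; omega

lemma Ds_single_cast (z : E8) (i : Fin 5) :
    Ds z (EuclideanSpace.single (Fin.castAdd 3 i) 1) = 2 * z (Fin.castAdd 3 i) := by
  rw [Ds_apply]
  simp [EuclideanSpace.single_apply, (Fin.castAdd_injective 5 3).eq_iff]

lemma Dt_single_cast (z : E8) (i : Fin 5) :
    Dt z (EuclideanSpace.single (Fin.castAdd 3 i) 1) = 0 := by
  rw [Dt_apply]
  simp [EuclideanSpace.single_apply, fun j => (cast_ne_nat i j).symm]

lemma Ds_single_nat (z : E8) (j : Fin 3) :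
    Ds z (EuclideanSpace.single (Fin.natAdd 5 j) 1) = 0 := by
  rw [Ds_apply]
  simp [EuclideanSpace.single_apply, fun i => cast_ne_nat i j]

lemma Dt_single_nat (z : E8) (j : Fin 3) :
    Dt z (EuclideanSpace.single (Fin.natAdd 5 j) 1) = 2 * z (Fin.natAdd 5 j) := by
  rw [Dt_apply]
  have hinj : Function.Injective (Fin.natAdd 5 : Fin 3 → Fin (5+3)) := by
    intro a b hab; simpa [Fin.ext_iff, Fin.natAdd] using hab
  simp [EuclideanSpace.single_apply, hinj.eq_iff]

lemma proj_single_same (i : Fin (5+3)) :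
    EuclideanSpace.proj (𝕜 := ℝ) i (EuclideanSpace.single i (1:ℝ)) = 1 := by
  simp [EuclideanSpace.single_apply]

lemma trace_pi (L : Fin (5+3) → (E8 →L[ℝ] ℝ)) :
    LinearMap.trace ℝ E8 ((((EuclideanSpace.equiv (Fin (5+3)) ℝ).symm :
        (Fin (5+3) → ℝ) →L[ℝ] E8).comp (ContinuousLinearMap.pi L)).toLinearMap) =
      ∑ i : Fin (5+3), L i (EuclideanSpace.single i 1) := by
  rw [LinearMap.trace_eq_matrix_trace ℝ (EuclideanSpace.basisFun (Fin (5+3)) ℝ).toBasis]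
  rw [Matrix.trace]
  apply Finset.sum_congr rfl
  intro i _
  rw [Matrix.diag, LinearMap.toMatrix_apply]
  rw [OrthonormalBasis.coe_toBasis, OrthonormalBasis.coe_toBasis_repr_apply,
    EuclideanSpace.basisFun_repr, EuclideanSpace.basisFun_apply]
  rfl

end HS

namespace HS

def Lc (z : E8) : Fin (5+3) → (E8 →L[ℝ] ℝ) := Fin.addCases
  (fun i => cxf z • EuclideanSpace.proj (𝕜 := ℝ) (Fin.castAdd 3 i) +
    z (Fin.castAdd 3 i) • (Kx1 z • Ds z + Kx2 z • Dt z))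
  (fun j => cyf z • EuclideanSpace.proj (𝕜 := ℝ) (Fin.natAdd 5 j) +
    z (Fin.natAdd 5 j) • (Ky1 z • Ds z + Ky2 z • Dt z))

lemma hasFDerivAt_Gfun (z : E8) (hz : 0 < sf z) :
    HasFDerivAt Gfun
      ((((EuclideanSpace.equiv (Fin (5+3)) ℝ).symm : (Fin (5+3) → ℝ) →L[ℝ] E8)).comp
        (ContinuousLinearMap.pi (Lc z))) z := by
  have hpi : HasFDerivAt (fun (w : E8) (i : Fin (5+3)) => Gfun w i)
      (ContinuousLinearMap.pi (Lc z)) z := by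
    apply hasFDerivAt_pi''
    intro i
    rw [ContinuousLinearMap.proj_pi]
    induction i using Fin.addCases with
    | left i =>
      simp only [Gfun, Lc, PiLp.toLp_apply, Fin.addCases_left]
      exact (hasFDerivAt_cxf z hz).mul
        ((EuclideanSpace.proj (𝕜 := ℝ) (Fin.castAdd 3 i)).hasFDerivAt)
    | right j =>
      simp only [Gfun, Lc, PiLp.toLp_apply, Fin.addCases_right]
      exact (hasFDerivAt_cyf z hz).mul
        ((EuclideanSpace.proj (𝕜 := ℝ) (Fin.natAdd 5 j)).hasFDerivAt)
  exact ((EuclideanSpace.equiv (Fin (5+3)) ℝ).symm.hasFDerivAt).comp z hpi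

lemma trace_Gfun (z : E8) :
    ∑ i : Fin (5+3), Lc z i (EuclideanSpace.single i 1) =
      5 * cxf z + 2 * Kx1 z * sf z + 3 * cyf z + 2 * Ky2 z * tf z := by
  rw [Fin.sum_univ_add]
  have e1 : ∀ i : Fin 5, Lc z (Fin.castAdd 3 i) (EuclideanSpace.single (Fin.castAdd 3 i) 1) =
      cxf z + 2 * Kx1 z * z (Fin.castAdd 3 i) ^ 2 := by
    intro i
    simp only [Lc, Fin.addCases_left, ContinuousLinearMap.add_apply,
      ContinuousLinearMap.coe_smul', Pi.smul_apply, smul_eq_mul,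
      Ds_single_cast, Dt_single_cast, proj_single_same]
    ring
  have e2 : ∀ j : Fin 3, Lc z (Fin.natAdd 5 j) (EuclideanSpace.single (Fin.natAdd 5 j) 1) =
      cyf z + 2 * Ky2 z * z (Fin.natAdd 5 j) ^ 2 := by
    intro j
    simp only [Lc, Fin.addCases_right, ContinuousLinearMap.add_apply,
      ContinuousLinearMap.coe_smul', Pi.smul_apply, smul_eq_mul,
      Ds_single_nat, Dt_single_nat, proj_single_same]
    ring
  rw [Finset.sum_congr rfl (fun i _ => e1 i), Finset.sum_congr rfl (fun j _ => e2 j),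
    Finset.sum_add_distrib, Finset.sum_add_distrib, ← Finset.mul_sum, ← Finset.mul_sum]
  have hsf : ∑ i : Fin 5, z (Fin.castAdd 3 i) ^ 2 = sf z := rfl
  have htf : ∑ j : Fin 3, z (Fin.natAdd 5 j) ^ 2 = tf z := rfl
  rw [hsf, htf]
  simp [Finset.sum_const]
  ring

end HS

namespace HS

lemma continuous_sf : Continuous sf := by
  apply continuous_finset_sum
  intro i _
  exact ((EuclideanSpace.proj (𝕜 := ℝ) (Fin.castAdd 3 i)).continuous).pow 2

lemma g_eventually_eq (z : E8) (hz : 0 < sf z) :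
    (fun w : E8 => ‖gradient fp w‖⁻¹ • gradient fp w) =ᶠ[nhds z] Gfun := by
  have hopen : IsOpen {w : E8 | 0 < sf w} := isOpen_lt continuous_const continuous_sf
  filter_upwards [hopen.mem_nhds hz] with w hw
  have hgrad : gradient fp w = Vf w := (hasGradientAt_fp w hw).gradient
  have hn2 : 0 < n2 w := n2_pos w hw
  have hnorm : ‖Vf w‖ = (n2 w) ^ ((1:ℝ)/2) := by
    rw [← Real.sqrt_sq (norm_nonneg (Vf w)), norm_Vf_sq w hw, Real.sqrt_eq_rpow]
  have hinv : (‖Vf w‖)⁻¹ = (n2 w) ^ (-((1:ℝ)/2)) := by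
    rw [hnorm, Real.rpow_neg hn2.le]
  rw [hgrad, hinv]
  ext i
  show (n2 w) ^ (-((1:ℝ)/2)) * Vf w i = Gfun w i
  induction i using Fin.addCases with
  | left i => simp only [Vf, Gfun, PiLp.toLp_apply, Fin.addCases_left, cxf]; ring
  | right j => simp only [Vf, Gfun, PiLp.toLp_apply, Fin.addCases_right, cyf]; ring

set_option maxHeartbeats 2000000 in
lemma final_algebra (z : E8) (hz : 0 < sf z) :
    5 * cxf z + 2 * Kx1 z * sf z + 3 * cyf z + 2 * Ky2 z * tf z =
      (1 / 32 * (2*sf z) ^ ((1:ℝ)/4) * (2*sf z - 4*tf z) *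
        (49 * (2*sf z) ^ 2 - 72 * (2*sf z) * (4*tf z) + 27 * (4*tf z) ^ 2)) /
      (n2 z) ^ ((3:ℝ)/2) := by
  have hx2 : (0:ℝ) ≤ 2 * sf z := by linarith
  have hx2' : (0:ℝ) < 2 * sf z := by linarith
  have hn2 : 0 < n2 z := n2_pos z hz
  have hqpos : 0 < (2*sf z) ^ ((1:ℝ)/4) := HS2.quarter_pos _ hx2'
  have hμpos : 0 < (n2 z) ^ ((1:ℝ)/2) := Real.rpow_pos_of_pos hn2 _
  simp only [cxf, cyf, Kx1, Ky2, M1a, M2a, A2a, A3a, E1a, E2a, C1a, C2a, Pc, Qc]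
  rw [show ((3:ℝ)/2) = (1:ℝ)/2 + 1 by norm_num, Real.rpow_add hn2, Real.rpow_one]
  rw [show (-((1:ℝ)/2)-1) = -((1:ℝ)/2+1) by ring, Real.rpow_neg hn2.le ((1:ℝ)/2+1),
    Real.rpow_add hn2, Real.rpow_one]
  rw [Real.rpow_neg hn2.le ((1:ℝ)/2)]
  rw [HS2.eq_r3 _ hx2, HS2.eq_rm1 _ hx2, HS2.eq_rm5 _ hx2, HS2.eq_rm2 _ hx2, HS2.eq_r2 _ hx2]
  have hrel : n2 z = 32⁻¹ * (((2*sf z) ^ ((1:ℝ)/4)) ^ 2 * Qq z) := by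
    rw [n2, HS2.eq_r2 _ hx2]
  rw [hrel]
  have hq4 : 2 * sf z = ((2*sf z) ^ ((1:ℝ)/4)) ^ 4 := HS2.eq_r4 _ hx2
  have hQpos : 0 < Qq z := Qq_pos z hz
  rw [Qq] at *
  have hsf : sf z = ((2*sf z) ^ ((1:ℝ)/4)) ^ 4 / 2 := by linarith
  generalize hq : (2*sf z) ^ ((1:ℝ)/4) = q at *
  have htv : (0:ℝ) ≤ tf z := tf_nonneg z
  generalize htt : tf z = T at *
  rw [hsf]
  -- μ atom
  generalize hμ : (32⁻¹ * (q ^ 2 * (49 * ((2 * (q ^ 4 / 2)) * (2 * (q ^ 4 / 2))) -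
    10 * ((2 * (q ^ 4 / 2)) * (4 * T)) + 9 * ((4 * T) * (4 * T))))) ^ ((1:ℝ)/2) = μ at *
  have hQ' : (0:ℝ) < 49 * (2 * (q ^ 4 / 2) * (2 * (q ^ 4 / 2))) -
      10 * (2 * (q ^ 4 / 2) * (4 * T)) + 9 * (4 * T * (4 * T)) := by
    nlinarith [sq_nonneg (5*q^4 - 4*T), sq_nonneg (4*T), pow_pos hqpos 4]
  have hbase : (0:ℝ) < 32⁻¹ * (q ^ 2 * (49 * (2 * (q ^ 4 / 2) * (2 * (q ^ 4 / 2))) -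
      10 * (2 * (q ^ 4 / 2) * (4 * T)) + 9 * (4 * T * (4 * T)))) := by
    have := pow_pos hqpos 2
    positivity
  have hμ0 : 0 < μ := hμ ▸ Real.rpow_pos_of_pos hbase _
  have h1 : q ≠ 0 := ne_of_gt hqpos
  have h2 : μ ≠ 0 := ne_of_gt hμ0
  have h3 : (49 * (2 * (q ^ 4 / 2) * (2 * (q ^ 4 / 2))) -
      10 * (2 * (q ^ 4 / 2) * (4 * T)) + 9 * (4 * T * (4 * T))) ≠ 0 := ne_of_gt hQ'
  have h4 : μ * (32⁻¹ * (q ^ 2 * (49 * (2 * (q ^ 4 / 2) * (2 * (q ^ 4 / 2))) -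
      10 * (2 * (q ^ 4 / 2) * (4 * T)) + 9 * (4 * T * (4 * T))))) ≠ 0 :=
    ne_of_gt (mul_pos hμ0 hbase)
  have h5 : (49 * (q ^ 4 * q ^ 4) - 10 * (q ^ 4 * (4 * T)) + 9 * (4 * T * (4 * T))) ≠ 0 := by
    have e : 49 * (q ^ 4 * q ^ 4) - 10 * (q ^ 4 * (4 * T)) + 9 * (4 * T * (4 * T))
        = 49 * (2 * (q ^ 4 / 2) * (2 * (q ^ 4 / 2))) - 10 * (2 * (q ^ 4 / 2) * (4 * T)) +
          9 * (4 * T * (4 * T)) := by ring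
    rw [e]; exact h3
  field_simp
  have h6 : (-(q ^ 4 * T * 40) + q ^ 8 * 49 + T ^ 2 * 144) ≠ 0 := by
    intro h; apply h3; linear_combination h
  ring_nf
  generalize hD : (-(q ^ 4 * T * 40) + q ^ 8 * 49 + T ^ 2 * 144) = D at h6 ⊢
  field_simp
  rw [← hD]
  ring

end HS


/-- The explicit formula for `div g` and `|∇f₊|^2` for `(h,k) = (3,5)` with `d = 3/4`,
valid wherever `x ≠ 0` (Section 3.4 of the paper). -/
theorem stmt16 (z : EuclideanSpace ℝ (Fin (5 + 3))) (hx : nX 5 3 z ≠ 0) :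
    divg (fun w => ‖gradient fp w‖⁻¹ • gradient fp w) z =
        (1 / 32 * uu z ^ ((1 : ℝ) / 4) * (uu z - vv z) *
            (49 * uu z ^ 2 - 72 * uu z * vv z + 27 * vv z ^ 2))
          / (1 / 32 * Real.sqrt (uu z) *
              (49 * uu z ^ 2 - 10 * uu z * vv z + 9 * vv z ^ 2)) ^ ((3 : ℝ) / 2) ∧
      ‖gradient fp z‖ ^ 2 =
        1 / 32 * Real.sqrt (uu z) *
          (49 * uu z ^ 2 - 10 * uu z * vv z + 9 * vv z ^ 2) := by
  have hs0 : HS.sf z ≠ 0 := fun h =>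
    hx (by rw [show nX 5 3 z = Real.sqrt (HS.sf z) from rfl, h, Real.sqrt_zero])
  have hsz : 0 < HS.sf z := lt_of_le_of_ne (HS.sf_nonneg z) (Ne.symm hs0)
  constructor
  · unfold divg
    rw [(HS.g_eventually_eq z hsz).fderiv_eq]
    rw [(HS.hasFDerivAt_Gfun z hsz).fderiv]
    rw [HS.trace_pi, HS.trace_Gfun]
    rw [HS.uu_eq, HS.vv_eq]
    have hbase : (1 / 32 * Real.sqrt (2 * HS.sf z) *
        (49 * (2 * HS.sf z) ^ 2 - 10 * (2 * HS.sf z) * (4 * HS.tf z) + 9 * (4 * HS.tf z) ^ 2))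
        = HS.n2 z := by
      rw [HS.n2, HS.Qq, Real.sqrt_eq_rpow]; ring
    rw [hbase]
    exact HS.final_algebra z hsz
  · rw [(HS.hasGradientAt_fp z hsz).gradient, HS.norm_Vf_sq z hsz, HS.uu_eq, HS.vv_eq,
      HS.n2, HS.Qq, Real.sqrt_eq_rpow]
    ring
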